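/- Let |ψ⟩ be a vector in (ℂ²)^{⊗n}, let J be a subset of the n qubits, let S be an invertible tensor product of n invertible 2×2 matrices, and set Z̃_J = S Z_J S⁻¹, where Z_J applies Pauli-Z on qubits in J and identity elsewhere. If the complement of J has odd cardinality, then ⟨ψ*| Y^{⊗n} Z̃_J |ψ⟩ = 0, where ⟨ψ*| is the transpose of |ψ⟩ in the computational basis. -/
import Mathlib


open Matrix BigOperators

noncomputable section

/-- Pauli X matrix. -/
def PX : Matrix (Fin 2) (Fin 2) ℂ := !![0, 1; 1, 0]
/-- Pauli Y matrix. -/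
def PY : Matrix (Fin 2) (Fin 2) ℂ := !![0, -Complex.I; Complex.I, 0]
/-- Pauli Z matrix. -/
def PZ : Matrix (Fin 2) (Fin 2) ℂ := !![1, 0; 0, -1]

/-- Tensor (Kronecker) product of `n` single-qubit operators, as a matrix on `(ℂ²)^{⊗n}`
indexed by bit strings. -/
def kprod {n : ℕ} (A : Fin n → Matrix (Fin 2) (Fin 2) ℂ) :
    Matrix (Fin n → Fin 2) (Fin n → Fin 2) ℂ :=
  Matrix.of fun x y => ∏ i, A i (x i) (y i)

/-- `Y^{⊗n}`. -/
def Yn (n : ℕ) : Matrix (Fin n → Fin 2) (Fin n → Fin 2) ℂ := kprod fun _ => PY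

/-- `Z_{j(1)}`: Pauli `Z` on the qubits where the bit string `j` equals 1. -/
def Zbits {n : ℕ} (j : Fin n → Fin 2) : Matrix (Fin n → Fin 2) (Fin n → Fin 2) ℂ :=
  kprod fun i => if j i = 1 then PZ else 1

/-- `Z_J`: Pauli `Z` on the qubits in the set `J`, identity elsewhere. -/
def ZJ {n : ℕ} (J : Finset (Fin n)) : Matrix (Fin n → Fin 2) (Fin n → Fin 2) ℂ :=
  kprod fun i => if i ∈ J then PZ else 1

/-- The graph-state stabilizer generator `σᵢ = Xᵢ Z_{N(i)}`. -/
def graphGen {n : ℕ} (G : SimpleGraph (Fin n)) [DecidableRel G.Adj] (i : Fin n) :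
    Matrix (Fin n → Fin 2) (Fin n → Fin 2) ℂ :=
  kprod fun k => if k = i then PX else if G.Adj i k then PZ else 1

/-- The stabilizer group `Σ(G)` of the graph state, generated by the `σᵢ`
(as a multiplicative closure; the generators are involutions so this is the group). -/
def stabGroup {n : ℕ} (G : SimpleGraph (Fin n)) [DecidableRel G.Adj] :
    Submonoid (Matrix (Fin n → Fin 2) (Fin n → Fin 2) ℂ) :=
  Submonoid.closure (Set.range (graphGen G))

/-- `g` is the graph state of `G`: the (unique up to phase) common `+1` unit eigenvector
of all stabilizer generators. -/
def IsGraphState {n : ℕ} (G : SimpleGraph (Fin n)) [DecidableRel G.Adj]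
    (g : (Fin n → Fin 2) → ℂ) : Prop :=
  star g ⬝ᵥ g = 1 ∧ ∀ i, graphGen G i *ᵥ g = g

/- ### Auxiliary lemmas -/

lemma kprod_mul {n : ℕ} (A B : Fin n → Matrix (Fin 2) (Fin 2) ℂ) :
    kprod A * kprod B = kprod (fun i => A i * B i) := by
  ext x y
  simp only [kprod, Matrix.mul_apply, Matrix.of_apply]
  rw [Finset.prod_univ_sum]
  simp [Finset.prod_mul_distrib]

lemma kprod_one {n : ℕ} : (kprod (fun _ => 1) : Matrix (Fin n → Fin 2) (Fin n → Fin 2) ℂ) = 1 := by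
  ext x y
  simp only [kprod, Matrix.of_apply, Matrix.one_apply]
  by_cases h : x = y
  · subst h; simp
  · rw [if_neg h]
    obtain ⟨i, hi⟩ := Function.ne_iff.mp h
    exact Finset.prod_eq_zero (Finset.mem_univ i) (by simp [Matrix.one_apply, hi])

lemma kprod_smul {n : ℕ} (c : Fin n → ℂ) (A : Fin n → Matrix (Fin 2) (Fin 2) ℂ) :
    kprod (fun i => c i • A i) = (∏ i, c i) • kprod A := by
  ext x y
  simp [kprod, Finset.prod_mul_distrib]

lemma kprod_transpose {n : ℕ} (A : Fin n → Matrix (Fin 2) (Fin 2) ℂ) :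
    (kprod A)ᵀ = kprod (fun i => (A i)ᵀ) := by
  ext x y; simp [kprod, Matrix.transpose_apply]

lemma PY_mul_PY : PY * PY = 1 := by
  ext i j; fin_cases i <;> fin_cases j <;>
    simp [Matrix.mul_apply, Fin.sum_univ_two, PY, Matrix.one_apply, Complex.I_mul_I]

lemma PY_transpose : PYᵀ = (-1 : ℂ) • PY := by
  ext i j; fin_cases i <;> fin_cases j <;> simp [PY]

lemma PZ_transpose : PZᵀ = PZ := by
  ext i j; fin_cases i <;> fin_cases j <;> simp [PZ]

lemma PY_PZ_PY : PY * PZ * PY = (-1 : ℂ) • PZ := by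
  ext i j; fin_cases i <;> fin_cases j <;>
    simp [Matrix.mul_apply, Fin.sum_univ_two, PY, PZ]

lemma PY_conj (A : Matrix (Fin 2) (Fin 2) ℂ) : PY * Aᵀ * PY = A.adjugate := by
  rw [Matrix.adjugate_fin_two]
  ext i j; fin_cases i <;> fin_cases j <;>
    simp [Matrix.mul_apply, Matrix.vecMul, dotProduct,
      Fin.sum_univ_two, PY] <;> ring_nf <;> simp [Complex.I_sq]

lemma transpose_eq (A : Matrix (Fin 2) (Fin 2) ℂ) (hA : IsUnit A.det) :
    Aᵀ = PY * (A.det • A⁻¹) * PY := by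
  have h : A.det • A⁻¹ = A.adjugate := by
    rw [Matrix.inv_def, smul_smul, Ring.mul_inverse_cancel _ hA, one_smul]
  rw [h, ← PY_conj, ← mul_assoc, ← mul_assoc, PY_mul_PY, mul_assoc, mul_assoc, PY_mul_PY]
  simp

lemma antisym_quadratic {m : Type*} [Fintype m] (M : Matrix m m ℂ) (h : Mᵀ = -M)
    (v : m → ℂ) : v ⬝ᵥ (M *ᵥ v) = 0 := by
  have h1 : v ⬝ᵥ (M *ᵥ v) = (Mᵀ *ᵥ v) ⬝ᵥ v := by
    rw [Matrix.dotProduct_mulVec, ← Matrix.mulVec_transpose]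
  rw [h] at h1
  rw [Matrix.neg_mulVec, neg_dotProduct] at h1
  rw [dotProduct_comm (M *ᵥ v) v] at h1
  linear_combination h1 / 2

/-- parity lemma: if `|V∖J|` is odd then `⟨ψ*| Y^{⊗n} Z̃_J |ψ⟩ = 0`,
where `Z̃_J = S Z_J S⁻¹`. -/
theorem stmt3 {n : ℕ} (ψ : (Fin n → Fin 2) → ℂ) (J : Finset (Fin n))
    (S : Fin n → Matrix (Fin 2) (Fin 2) ℂ) (hS : ∀ i, IsUnit (S i).det)
    (hodd : Odd Jᶜ.card) :
    ψ ⬝ᵥ ((Yn n * (kprod S * ZJ J * (kprod S)⁻¹)) *ᵥ ψ) = 0 := by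
  set T : Fin n → Matrix (Fin 2) (Fin 2) ℂ := fun i => (S i)⁻¹ with hT
  have hKT : kprod S * kprod T = 1 := by
    rw [kprod_mul]
    have h : (fun i => S i * T i) = (fun _ => (1 : Matrix (Fin 2) (Fin 2) ℂ)) := by
      funext i; exact Matrix.mul_nonsing_inv _ (hS i)
    rw [h, kprod_one]
  have hKinv : (kprod S)⁻¹ = kprod T := Matrix.inv_eq_right_inv hKT
  have hYY : Yn n * Yn n = 1 := by
    rw [Yn, kprod_mul]
    have h : (fun _ : Fin n => PY * PY) = (fun _ => (1 : Matrix (Fin 2) (Fin 2) ℂ)) := by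
      funext _; exact PY_mul_PY
    rw [h, kprod_one]
  have hYY' : ∀ X : Matrix (Fin n → Fin 2) (Fin n → Fin 2) ℂ,
      Yn n * (Yn n * X) = X := fun X => by rw [← mul_assoc, hYY, one_mul]
  have hZt : (ZJ J)ᵀ = ZJ J := by
    rw [ZJ, kprod_transpose]
    have h : (fun i => (if i ∈ J then PZ else 1)ᵀ)
        = (fun i => if i ∈ J then PZ else 1) := by
      funext i; by_cases h : i ∈ J <;> simp [h, PZ_transpose]
    rw [h]
  have hYt : (Yn n)ᵀ = ((-1 : ℂ) ^ n) • Yn n := by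
    rw [Yn, kprod_transpose]
    have h : (fun _ : Fin n => PYᵀ) = (fun _ => (-1 : ℂ) • PY) := by
      funext _; exact PY_transpose
    rw [h, kprod_smul, Finset.prod_const, Finset.card_univ, Fintype.card_fin]
  have hYZY : Yn n * ZJ J * Yn n = ((-1 : ℂ) ^ J.card) • ZJ J := by
    rw [Yn, ZJ, kprod_mul, kprod_mul]
    have h : (fun i => PY * (if i ∈ J then PZ else 1) * PY)
        = (fun i => (if i ∈ J then (-1 : ℂ) else 1) • (if i ∈ J then PZ else 1)) := by
      funext i
      by_cases h : i ∈ J <;> simp [h, PY_PZ_PY, PY_mul_PY]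
    rw [h, kprod_smul]
    congr 1
    rw [Finset.prod_ite_mem, Finset.univ_inter, Finset.prod_const]
  have hcomm : ZJ J * Yn n = ((-1 : ℂ) ^ J.card) • (Yn n * ZJ J) := by
    calc ZJ J * Yn n = Yn n * (Yn n * (ZJ J * Yn n)) := by rw [hYY']
    _ = Yn n * (Yn n * ZJ J * Yn n) := by rw [mul_assoc]
    _ = ((-1 : ℂ) ^ J.card) • (Yn n * ZJ J) := by rw [hYZY]; simp [Matrix.mul_smul]
  set D : ℂ := ∏ i, (S i).det with hD
  set E : ℂ := ∏ i, Ring.inverse (S i).det with hE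
  have hED : E * D = 1 := by
    rw [hE, hD, ← Finset.prod_mul_distrib]
    exact Finset.prod_eq_one fun i _ => Ring.inverse_mul_cancel _ (hS i)
  have hKt : (kprod S)ᵀ = D • (Yn n * (kprod T * Yn n)) := by
    rw [kprod_transpose]
    have h : (fun i => (S i)ᵀ) = (fun i => PY * ((S i).det • T i) * PY) := by
      funext i; exact transpose_eq (S i) (hS i)
    rw [h]
    have h2 : (fun i => PY * ((S i).det • T i) * PY)
        = (fun i => (S i).det • (PY * T i * PY)) := by
      funext i; simp [Matrix.mul_smul, Matrix.smul_mul]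
    rw [h2, kprod_smul, ← kprod_mul, ← kprod_mul, ← hD, mul_assoc]
    rfl
  have hTt : (kprod T)ᵀ = E • (Yn n * (kprod S * Yn n)) := by
    rw [kprod_transpose]
    have h : (fun i => (T i)ᵀ) = (fun i => Ring.inverse (S i).det • (PY * S i * PY)) := by
      funext i
      have hu : IsUnit (T i).det := (Matrix.isUnit_nonsing_inv_det (S i) (hS i))
      have := transpose_eq (T i) hu
      rw [Matrix.det_nonsing_inv, Matrix.nonsing_inv_nonsing_inv _ (hS i)] at this
      rw [this]
      simp [Matrix.mul_smul, Matrix.smul_mul]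
    rw [h, kprod_smul, ← kprod_mul, ← kprod_mul, ← hE, mul_assoc]
    rfl
  -- parity
  have hsign : ((-1 : ℂ) ^ n) * ((-1 : ℂ) ^ J.card) = -1 := by
    have hn : n = J.card + Jᶜ.card := by
      simpa using (Finset.card_add_card_compl J).symm
    have hsq : ((-1 : ℂ) ^ J.card) ^ 2 = 1 := by
      rw [← pow_mul, mul_comm, pow_mul]; simp
    have hpow : ((-1 : ℂ) ^ n) = (-1 : ℂ) ^ J.card * (-1 : ℂ) ^ Jᶜ.card := by
      rw [← pow_add, ← hn]
    calc ((-1 : ℂ) ^ n) * ((-1 : ℂ) ^ J.card)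
        = ((-1 : ℂ) ^ J.card) ^ 2 * (-1 : ℂ) ^ Jᶜ.card := by rw [hpow]; ring
      _ = -1 := by rw [hsq, one_mul, hodd.neg_one_pow]
  -- antisymmetry of M
  have hMt : (Yn n * (kprod S * ZJ J * kprod T))ᵀ
      = -(Yn n * (kprod S * ZJ J * kprod T)) := by
    rw [Matrix.transpose_mul, Matrix.transpose_mul, Matrix.transpose_mul,
      hZt, hYt, hKt, hTt]
    simp only [Matrix.smul_mul, Matrix.mul_smul, smul_smul, mul_assoc]
    rw [hYY, mul_one]
    have hYZY' : ∀ X, Yn n * (ZJ J * (Yn n * X)) = ((-1 : ℂ) ^ J.card) • (ZJ J * X) := by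
      intro X
      calc Yn n * (ZJ J * (Yn n * X)) = (Yn n * ZJ J * Yn n) * X := by
            rw [mul_assoc, mul_assoc]
        _ = _ := by rw [hYZY, Matrix.smul_mul]
    rw [hYZY']
    simp only [Matrix.mul_smul, smul_smul]
    rw [show (-1 : ℂ) ^ n * (D * E) * (-1 : ℂ) ^ J.card
        = (E * D) * ((-1 : ℂ) ^ n * (-1 : ℂ) ^ J.card) by ring,
      hED, one_mul, hsign, neg_one_smul]
  rw [hKinv, hT]
  exact antisym_quadratic _ hMt ψ
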